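/- arXiv:2103.12200 — 6 statements merged into one kernel-verified Lean document; each statement's English description precedes it below -/
import Mathlib

section
/- Let (Ω, 𝒜, μ) be a probability space and {E_i}_{i∈ℕ} a sequence of measurable sets. Suppose ∑_{i=1}^∞ μ(E_i) = ∞ and ∑_{s,t=1}^Q μ(E_s ∩ E_t) ≤ (∑_{s=1}^Q μ(E_s))² holds for infinitely many Q ∈ ℕ. Then μ(limsup_{i→∞} E_i) = 1. -/
open MeasureTheory Filter Set
open scoped ENNReal

lemma chung_erdos_aux {Ω : Type*} [MeasurableSpace Ω] (μ : Measure Ω)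
    (E : ℕ → Set Ω) (hE : ∀ i, MeasurableSet (E i)) (F : Finset ℕ) :
    (∑ i ∈ F, μ (E i)) ^ 2 ≤ (∑ s ∈ F, ∑ t ∈ F, μ (E s ∩ E t)) * μ (⋃ i ∈ F, E i) := by
  classical
  set U : Set Ω := ⋃ i ∈ F, E i with hU_def
  have hU : MeasurableSet U := MeasurableSet.biUnion F.countable_toSet (fun i _ => hE i)
  have hf : Measurable (fun x => ∑ i ∈ F, (E i).indicator (1 : Ω → ℝ≥0∞) x) :=
    Finset.measurable_sum F (fun i _ => measurable_one.indicator (hE i))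
  have hg : Measurable (U.indicator (1 : Ω → ℝ≥0∞)) := measurable_one.indicator hU
  have hfg : ∀ x, (∑ i ∈ F, (E i).indicator (1 : Ω → ℝ≥0∞) x) * U.indicator (1 : Ω → ℝ≥0∞) x
      = ∑ i ∈ F, (E i).indicator (1 : Ω → ℝ≥0∞) x := by
    intro x
    by_cases hx : x ∈ U
    · simp [Set.indicator_of_mem hx]
    · have h0 : ∑ i ∈ F, (E i).indicator (1 : Ω → ℝ≥0∞) x = 0 := by
        apply Finset.sum_eq_zero
        intro i hi
        have hxi : x ∉ E i := fun h => hx (Set.mem_biUnion hi h)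
        simp [Set.indicator_of_notMem hxi]
      rw [h0, zero_mul]
  have h1 : ∫⁻ x, (∑ i ∈ F, (E i).indicator (1 : Ω → ℝ≥0∞) x) ∂μ = ∑ i ∈ F, μ (E i) := by
    rw [lintegral_finset_sum F (fun i _ => measurable_one.indicator (hE i))]
    exact Finset.sum_congr rfl fun i _ => lintegral_indicator_one (hE i)
  have h2 : ∫⁻ x, (∑ i ∈ F, (E i).indicator (1 : Ω → ℝ≥0∞) x) ^ (2:ℝ) ∂μ
      = ∑ s ∈ F, ∑ t ∈ F, μ (E s ∩ E t) := by
    have key : ∀ x, (∑ i ∈ F, (E i).indicator (1 : Ω → ℝ≥0∞) x) ^ (2:ℝ)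
        = ∑ s ∈ F, ∑ t ∈ F, (E s ∩ E t).indicator (1 : Ω → ℝ≥0∞) x := by
      intro x
      rw [ENNReal.rpow_two, sq, Finset.sum_mul_sum]
      refine Finset.sum_congr rfl fun s _ => Finset.sum_congr rfl fun t _ => ?_
      rw [Set.inter_indicator_one]; rfl
    simp_rw [key]
    rw [lintegral_finset_sum F (fun s _ => Finset.measurable_sum F
      (fun t _ => measurable_one.indicator ((hE s).inter (hE t))))]
    refine Finset.sum_congr rfl fun s _ => ?_
    rw [lintegral_finset_sum F (fun t _ => measurable_one.indicator ((hE s).inter (hE t)))]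
    exact Finset.sum_congr rfl fun t _ => lintegral_indicator_one ((hE s).inter (hE t))
  have h3 : ∫⁻ x, U.indicator (1 : Ω → ℝ≥0∞) x ^ (2:ℝ) ∂μ = μ U := by
    have key : ∀ x, U.indicator (1 : Ω → ℝ≥0∞) x ^ (2:ℝ) = U.indicator (1 : Ω → ℝ≥0∞) x := by
      intro x
      by_cases hx : x ∈ U <;>
        simp [Set.indicator_of_mem, Set.indicator_of_notMem, hx,
          ENNReal.zero_rpow_of_pos (by norm_num : (0:ℝ) < 2)]
    simp_rw [key]
    exact lintegral_indicator_one hU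
  have hpq : Real.HolderConjugate 2 2 := Real.holderConjugate_iff.mpr ⟨one_lt_two, by norm_num⟩
  have holder := ENNReal.lintegral_mul_le_Lp_mul_Lq μ hpq hf.aemeasurable hg.aemeasurable
  simp only [Pi.mul_apply] at holder
  simp_rw [hfg] at holder
  rw [h1, h2, h3] at holder
  calc (∑ i ∈ F, μ (E i)) ^ 2
      ≤ ((∑ s ∈ F, ∑ t ∈ F, μ (E s ∩ E t)) ^ (1/(2:ℝ)) * μ U ^ (1/(2:ℝ))) ^ 2 :=
        pow_le_pow_left₀ (zero_le) holder 2
    _ = (∑ s ∈ F, ∑ t ∈ F, μ (E s ∩ E t)) * μ U := by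
        rw [mul_pow, ← ENNReal.rpow_natCast (_ ^ (1/(2:ℝ))),
          ← ENNReal.rpow_natCast (μ U ^ (1/(2:ℝ))), ← ENNReal.rpow_mul, ← ENNReal.rpow_mul]
        norm_num

/-- **Divergence Borel–Cantelli Lemma (full measure case).** If the measures of the sets
`E i` sum to infinity and the quasi-independence-on-average condition holds with constant `1`
for infinitely many `Q`, then the limsup set has full measure. -/
theorem divergence_borel_cantelli_full
    {Ω : Type*} [MeasurableSpace Ω] (μ : Measure Ω) [IsProbabilityMeasure μ]
    (E : ℕ → Set Ω) (hE : ∀ i, MeasurableSet (E i))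
    (hdiv : ∑' i, μ (E i) = ⊤)
    (hQI : ∃ᶠ Q in atTop,
      ∑ s ∈ Finset.range Q, ∑ t ∈ Finset.range Q, μ (E s ∩ E t)
        ≤ (∑ s ∈ Finset.range Q, μ (E s)) ^ 2) :
    μ (limsup E atTop) = 1 := by
  classical
  have hfin : ∀ Q, (∑ i ∈ Finset.range Q, μ (E i)) ≠ ⊤ := fun Q =>
    (ENNReal.sum_lt_top.mpr fun i _ => measure_lt_top μ _).ne
  have htend : Tendsto (fun Q => ∑ i ∈ Finset.range Q, μ (E i)) atTop (nhds ⊤) := by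
    rw [← hdiv]; exact ENNReal.tendsto_nat_tsum _
  -- real partial sums tend to infinity
  have hreal : ∀ C : ℝ, ∀ᶠ Q in atTop, C ≤ (∑ i ∈ Finset.range Q, μ (E i)).toReal := by
    intro C
    filter_upwards [ENNReal.tendsto_nhds_top_iff_nnreal.mp htend C.toNNReal] with Q hQ
    calc C ≤ (C.toNNReal : ℝ) := Real.le_coe_toNNReal C
      _ ≤ (∑ i ∈ Finset.range Q, μ (E i)).toReal := by
          rw [← ENNReal.coe_toReal (r := C.toNNReal)]
          exact ENNReal.toReal_mono (hfin Q) hQ.le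
  have hAone : ∀ N, μ (⋃ i, ⋃ (_ : N ≤ i), E i) = 1 := by
    intro N
    have hAm : MeasurableSet (⋃ i, ⋃ (_ : N ≤ i), E i) :=
      MeasurableSet.iUnion fun i => MeasurableSet.iUnion fun _ => hE i
    refine le_antisymm prob_le_one ?_
    rw [show (1:ℝ≥0∞) = ENNReal.ofReal 1 by simp]
    refine ENNReal.ofReal_le_of_le_toReal ?_
    set m := (μ (⋃ i, ⋃ (_ : N ≤ i), E i)).toReal with hm_def
    by_contra hlt
    push_neg at hlt
    have hm0 : 0 ≤ m := ENNReal.toReal_nonneg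
    set c := (m + 1) / 2 with hc_def
    have hmc : m < c := by rw [hc_def]; linarith
    have hc1 : c < 1 := by rw [hc_def]; linarith
    have hc0 : 0 < c := by rw [hc_def]; linarith
    set ε := Real.sqrt c with hε_def
    have hε0 : 0 < ε := Real.sqrt_pos.mpr hc0
    have hε1 : ε < 1 := by
      rw [hε_def, show (1:ℝ) = Real.sqrt 1 by simp]
      exact Real.sqrt_lt_sqrt hc0.le hc1
    have hε2 : ε ^ 2 = c := Real.sq_sqrt hc0.le
    set sN := (∑ i ∈ Finset.range N, μ (E i)).toReal with hsN_def
    -- find a good Q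
    obtain ⟨Q, hgood, hNQ, hsQ1, hsQbig⟩ :
        ∃ Q, (∑ s ∈ Finset.range Q, ∑ t ∈ Finset.range Q, μ (E s ∩ E t)
            ≤ (∑ s ∈ Finset.range Q, μ (E s)) ^ 2) ∧ N ≤ Q ∧
          1 ≤ (∑ i ∈ Finset.range Q, μ (E i)).toReal ∧
          sN / (1 - ε) ≤ (∑ i ∈ Finset.range Q, μ (E i)).toReal := by
      have hev : ∀ᶠ Q in atTop, N ≤ Q ∧
          1 ≤ (∑ i ∈ Finset.range Q, μ (E i)).toReal ∧
          sN / (1 - ε) ≤ (∑ i ∈ Finset.range Q, μ (E i)).toReal :=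
        (eventually_ge_atTop N).and ((hreal 1).and (hreal _))
      obtain ⟨Q, h1, h2, h3, h4⟩ := (hQI.and_eventually hev).exists
      exact ⟨Q, h1, h2, h3, h4⟩
    set F : Finset ℕ := Finset.range Q \ Finset.range N with hF_def
    have hsub : F ⊆ Finset.range Q := Finset.sdiff_subset
    have key := chung_erdos_aux μ E hE F
    have hDD : ∑ s ∈ F, ∑ t ∈ F, μ (E s ∩ E t)
        ≤ ∑ s ∈ Finset.range Q, ∑ t ∈ Finset.range Q, μ (E s ∩ E t) :=
      le_trans (Finset.sum_le_sum fun s _ => Finset.sum_le_sum_of_subset hsub)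
        (Finset.sum_le_sum_of_subset hsub)
    have hUsub : (⋃ i ∈ F, E i) ⊆ ⋃ i, ⋃ (_ : N ≤ i), E i := by
      refine Set.iUnion₂_subset fun i hi => ?_
      have hNi : N ≤ i := by
        have := (Finset.mem_sdiff.mp hi).2
        simpa [Finset.mem_range, not_lt] using this
      exact Set.subset_iUnion₂ (s := fun i (_ : N ≤ i) => E i) i hNi
    have hkey2 : (∑ i ∈ F, μ (E i)) ^ 2
        ≤ (∑ s ∈ Finset.range Q, μ (E s)) ^ 2 * μ (⋃ i, ⋃ (_ : N ≤ i), E i) :=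
      key.trans (mul_le_mul' (hDD.trans hgood) (measure_mono hUsub))
    -- pass to reals
    set sQ := (∑ i ∈ Finset.range Q, μ (E i)).toReal with hsQ_def
    set tQ := (∑ i ∈ F, μ (E i)).toReal with htQ_def
    have hTfin : (∑ i ∈ F, μ (E i)) ≠ ⊤ :=
      (ENNReal.sum_lt_top.mpr fun i _ => measure_lt_top μ _).ne
    have hsplit : tQ + sN = sQ := by
      rw [htQ_def, hsN_def, hsQ_def, ← ENNReal.toReal_add hTfin (hfin N), hF_def,
        Finset.sum_sdiff (Finset.range_subset_range.mpr hNQ)]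
    have hreal_ineq : tQ ^ 2 ≤ sQ ^ 2 * m := by
      have h := ENNReal.toReal_mono (by
          exact ENNReal.mul_ne_top (ENNReal.pow_ne_top (hfin Q)) (measure_ne_top μ _)) hkey2
      rwa [ENNReal.toReal_pow, ENNReal.toReal_mul, ENNReal.toReal_pow] at h
    have hsN_le : sN ≤ (1 - ε) * sQ := by
      have h1ε : 0 < 1 - ε := by linarith
      rw [div_le_iff₀ h1ε] at hsQbig
      linarith [hsQbig]
    have htQ_ge : ε * sQ ≤ tQ := by nlinarith
    have hc_le : c * sQ ^ 2 ≤ sQ ^ 2 * m := by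
      have h0 : 0 ≤ ε * sQ := by positivity
      have := pow_le_pow_left₀ h0 htQ_ge 2
      nlinarith
    have hsQpos : (0:ℝ) < sQ ^ 2 := by nlinarith
    nlinarith
  -- conclude
  have hls : limsup E atTop = ⋂ N, ⋃ i, ⋃ (_ : N ≤ i), E i := by
    rw [limsup_eq_iInf_iSup_of_nat]
    simp only [Set.iInf_eq_iInter, Set.iSup_eq_iUnion, ge_iff_le]
  rw [hls]
  have hAm : ∀ N, MeasurableSet (⋃ i, ⋃ (_ : N ≤ i), E i) := fun N =>
    MeasurableSet.iUnion fun i => MeasurableSet.iUnion fun _ => hE i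
  rw [← prob_compl_eq_zero_iff (MeasurableSet.iInter hAm)]
  rw [Set.compl_iInter]
  refine measure_iUnion_null fun N => ?_
  rw [prob_compl_eq_zero_iff (hAm N)]
  exact hAone N
end

section
/- Let (Ω, 𝒜, μ, d) be a metric measure space equipped with a Borel probability measure μ, and let {E_i}_{i∈ℕ} be a sequence of Borel subsets of Ω. Suppose there exists an increasing function f : (0,∞) → (0,∞) with f(x) → 0 as x → 0 such that for every open set A ⊆ Ω with μ(A) > 0 there is a sequence {L_{i,A}}_{i∈ℕ} of measurable sets with L_{i,A} ⊆ E_i ∩ A for every i, ∑_{i=1}^∞ μ(L_{i,A}) = ∞, and ∑_{s,t=1}^Q μ(L_{s,A} ∩ L_{t,A}) ≤ (1/f(μ(A))) (∑_{s=1}^Q μ(L_{s,A}))² for infinitely many Q ∈ ℕ. Then μ(limsup_{i→∞} E_i) = 1. -/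
open MeasureTheory Filter Set Metric
open scoped ENNReal Topology

private lemma sq_sum_measure_le {Ω : Type*} [MeasurableSpace Ω] (μ : Measure Ω)
    (L : ℕ → Set Ω) (hL : ∀ i, MeasurableSet (L i)) (s : Finset ℕ)
    {U : Set Ω} (hU : MeasurableSet U) (hsub : ∀ i ∈ s, L i ⊆ U) :
    (∑ i ∈ s, μ (L i)) ^ 2 ≤ μ U * ∑ i ∈ s, ∑ j ∈ s, μ (L i ∩ L j) := by
  classical
  set g : Ω → ℝ≥0∞ := fun x => ∑ i ∈ s, (L i).indicator 1 x with hg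
  have hgim : ∀ i : ℕ, Measurable ((L i).indicator (1 : Ω → ℝ≥0∞)) :=
    fun i => measurable_one.indicator (hL i)
  have hgmeas : Measurable g := Finset.measurable_sum _ fun i _ => hgim i
  have h1 : ∫⁻ x, g x ∂μ = ∑ i ∈ s, μ (L i) := by
    rw [lintegral_finset_sum _ fun i _ => hgim i]
    exact Finset.sum_congr rfl fun i _ => lintegral_indicator_one (hL i)
  have h2 : ∫⁻ x, g x * g x ∂μ = ∑ i ∈ s, ∑ j ∈ s, μ (L i ∩ L j) := by
    have hpt : ∀ x, g x * g x
        = ∑ i ∈ s, ∑ j ∈ s, (L i ∩ L j).indicator (1 : Ω → ℝ≥0∞) x := by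
      intro x
      rw [hg, Finset.sum_mul_sum]
      refine Finset.sum_congr rfl fun i _ => Finset.sum_congr rfl fun j _ => ?_
      rw [Set.inter_indicator_one]
      rfl
    calc ∫⁻ x, g x * g x ∂μ
        = ∫⁻ x, ∑ i ∈ s, ∑ j ∈ s, (L i ∩ L j).indicator (1 : Ω → ℝ≥0∞) x ∂μ := by
          exact lintegral_congr hpt
      _ = ∑ i ∈ s, ∑ j ∈ s, μ (L i ∩ L j) := by
          rw [lintegral_finset_sum _ fun i _ => Finset.measurable_sum _
            (fun j _ => measurable_one.indicator ((hL i).inter (hL j)))]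
          refine Finset.sum_congr rfl fun i _ => ?_
          rw [lintegral_finset_sum _ fun j _ => measurable_one.indicator ((hL i).inter (hL j))]
          exact Finset.sum_congr rfl fun j _ => lintegral_indicator_one ((hL i).inter (hL j))
  have hconj : Real.HolderConjugate 2 2 := Real.holderConjugate_iff.mpr ⟨one_lt_two, by norm_num⟩
  have hCS := ENNReal.lintegral_mul_le_Lp_mul_Lq μ hconj
    (f := U.indicator (1 : Ω → ℝ≥0∞)) (g := g)
    (measurable_one.indicator hU).aemeasurable hgmeas.aemeasurable
  have hind : ∫⁻ x, (U.indicator (1 : Ω → ℝ≥0∞) * g) x ∂μ = ∫⁻ x, g x ∂μ := by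
    refine lintegral_congr fun x => ?_
    by_cases hx : x ∈ U
    · simp [hx]
    · have hzero : g x = 0 :=
        Finset.sum_eq_zero fun i hi =>
          Set.indicator_of_notMem (fun hmem => hx (hsub i hi hmem)) _
      simp [hzero]
  have hindsq : ∫⁻ x, U.indicator (1 : Ω → ℝ≥0∞) x ^ (2 : ℝ) ∂μ = μ U := by
    have : ∀ x, U.indicator (1 : Ω → ℝ≥0∞) x ^ (2 : ℝ)
        = U.indicator (1 : Ω → ℝ≥0∞) x := by
      intro x
      by_cases hx : x ∈ U <;> simp [hx, ENNReal.zero_rpow_of_pos]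
    rw [lintegral_congr this, lintegral_indicator_one hU]
  have hgsq : ∫⁻ x, g x ^ (2 : ℝ) ∂μ = ∑ i ∈ s, ∑ j ∈ s, μ (L i ∩ L j) := by
    rw [← h2]
    refine lintegral_congr fun x => ?_
    rw [show (2 : ℝ) = ((2 : ℕ) : ℝ) by norm_num, ENNReal.rpow_natCast, sq]
  have hmain : ∑ i ∈ s, μ (L i)
      ≤ μ U ^ (1 / 2 : ℝ) * (∑ i ∈ s, ∑ j ∈ s, μ (L i ∩ L j)) ^ (1 / 2 : ℝ) := by
    calc ∑ i ∈ s, μ (L i) = ∫⁻ x, g x ∂μ := h1.symm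
      _ = ∫⁻ x, (U.indicator (1 : Ω → ℝ≥0∞) * g) x ∂μ := hind.symm
      _ ≤ (∫⁻ x, U.indicator (1 : Ω → ℝ≥0∞) x ^ (2 : ℝ) ∂μ) ^ (1 / 2 : ℝ)
            * (∫⁻ x, g x ^ (2 : ℝ) ∂μ) ^ (1 / 2 : ℝ) := hCS
      _ = μ U ^ (1 / 2 : ℝ) * (∑ i ∈ s, ∑ j ∈ s, μ (L i ∩ L j)) ^ (1 / 2 : ℝ) := by
          rw [hindsq, hgsq]
  have hsq : ∀ a : ℝ≥0∞, (a ^ (1 / 2 : ℝ)) ^ 2 = a := by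
    intro a
    rw [← ENNReal.rpow_natCast (a ^ (1 / 2 : ℝ)) 2, ← ENNReal.rpow_mul]
    norm_num
  calc (∑ i ∈ s, μ (L i)) ^ 2
      ≤ (μ U ^ (1 / 2 : ℝ) * (∑ i ∈ s, ∑ j ∈ s, μ (L i ∩ L j)) ^ (1 / 2 : ℝ)) ^ 2 :=
        pow_le_pow_left' hmain 2
    _ = μ U * ∑ i ∈ s, ∑ j ∈ s, μ (L i ∩ L j) := by
        rw [mul_pow, hsq, hsq]

private lemma limsup_measure_ge {Ω : Type*} [MeasurableSpace Ω] (μ : Measure Ω)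
    [IsProbabilityMeasure μ] (L : ℕ → Set Ω) (hL : ∀ i, MeasurableSet (L i))
    (hdiv : ∑' i, μ (L i) = ⊤) {c : ℝ} (hc : 0 < c)
    (hfreq : ∃ᶠ Q in atTop,
      ∑ s ∈ Finset.range Q, ∑ t ∈ Finset.range Q, μ (L s ∩ L t)
        ≤ ENNReal.ofReal (1 / c) * (∑ s ∈ Finset.range Q, μ (L s)) ^ 2) :
    ENNReal.ofReal c ≤ μ (limsup L atTop) := by
  classical
  set U : ℕ → Set Ω := fun n => ⋃ i, ⋃ (_ : n ≤ i), L i with hU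
  have hUmeas : ∀ n, MeasurableSet (U n) :=
    fun n => MeasurableSet.iUnion fun i => MeasurableSet.iUnion fun _ => hL i
  have hanti : Antitone U := by
    intro m n hmn
    exact Set.iUnion₂_subset fun i hi =>
      Set.subset_iUnion₂ (s := fun i (_ : m ≤ i) => L i) i (hmn.trans hi)
  have hlimsup : limsup L atTop = ⋂ n, U n := by
    rw [limsup_eq_iInf_iSup_of_nat]
    rfl
  set S : ℕ → ℝ≥0∞ := fun Q => ∑ i ∈ Finset.range Q, μ (L i) with hSdef
  have hSfin : ∀ Q, S Q ≠ ⊤ := by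
    intro Q
    exact (ENNReal.sum_lt_top.mpr fun i _ => measure_lt_top μ _).ne
  have hStop : Tendsto S atTop (𝓝 ⊤) := by
    rw [← hdiv]
    exact ENNReal.tendsto_nat_tsum _
  set P : ℕ → Prop := fun Q =>
    ∑ s ∈ Finset.range Q, ∑ t ∈ Finset.range Q, μ (L s ∩ L t)
      ≤ ENNReal.ofReal (1 / c) * (S Q) ^ 2 with hP
  set F : Filter ℕ := atTop ⊓ Filter.principal {Q | P Q} with hF
  have hFne : F.NeBot := Filter.frequently_iff_neBot.mp hfreq
  set a : ℕ → ℝ := fun Q => (S Q).toReal with ha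
  have haF : Tendsto a F atTop := by
    rw [Filter.tendsto_atTop]
    intro M
    have hev := (ENNReal.tendsto_nhds_top_iff_nnreal.mp
      (hStop.mono_left (inf_le_left : F ≤ atTop))) (Real.toNNReal M)
    filter_upwards [hev] with Q hQ
    have h1 : (Real.toNNReal M : ℝ≥0∞).toReal ≤ a Q :=
      ENNReal.toReal_mono (hSfin Q) hQ.le
    rw [ENNReal.coe_toReal] at h1
    exact (Real.le_coe_toNNReal M).trans h1
  have key : ∀ n, ENNReal.ofReal c ≤ μ (U n) := by
    intro n
    set m : ℝ := (μ (U n)).toReal with hm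
    set b : ℝ := (S n).toReal with hb
    have hb0 : 0 ≤ b := ENNReal.toReal_nonneg
    have hm0 : 0 ≤ m := ENNReal.toReal_nonneg
    suffices hcm : c ≤ m by
      calc ENNReal.ofReal c ≤ ENNReal.ofReal m := ENNReal.ofReal_le_ofReal hcm
        _ = μ (U n) := ENNReal.ofReal_toReal (measure_ne_top μ _)
    have htends : Tendsto (fun Q => c * (1 - b / a Q) ^ 2) F (𝓝 c) := by
      have h0 : Tendsto (fun Q => b / a Q) F (𝓝 0) :=
        Tendsto.div_atTop tendsto_const_nhds haF
      have h1 : Tendsto (fun Q => (1 : ℝ) - b / a Q) F (𝓝 (1 - 0)) :=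
        (tendsto_const_nhds : Tendsto (fun _ : ℕ => (1 : ℝ)) F (𝓝 1)).sub h0
      have h2 := (h1.pow 2).const_mul c
      simpa using h2
    have hPev : ∀ᶠ Q in F, P Q := by
      rw [hF, Filter.eventually_inf_principal]
      exact Filter.Eventually.of_forall fun Q hQ => hQ
    have hnev : ∀ᶠ Q in F, n ≤ Q :=
      (Filter.eventually_ge_atTop n).filter_mono inf_le_left
    have haev : ∀ᶠ Q in F, b + 1 ≤ a Q := haF.eventually_ge_atTop (b + 1)
    have hbound : ∀ᶠ Q in F, c * (1 - b / a Q) ^ 2 ≤ m := by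
      filter_upwards [hPev, hnev, haev] with Q hPQ hnQ haQ
      have haQ0 : 0 < a Q := by linarith
      -- ENNReal chain
      have hsub' : ∀ i ∈ Finset.Ico n Q, L i ⊆ U n := fun i hi =>
        Set.subset_iUnion₂ (s := fun i (_ : n ≤ i) => L i) i (Finset.mem_Ico.mp hi).1
      have h1 := sq_sum_measure_le μ L hL (Finset.Ico n Q) (hUmeas n) hsub'
      have h2 : ∑ i ∈ Finset.Ico n Q, ∑ j ∈ Finset.Ico n Q, μ (L i ∩ L j)
          ≤ ∑ i ∈ Finset.range Q, ∑ j ∈ Finset.range Q, μ (L i ∩ L j) := by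
        have hIco : Finset.Ico n Q ⊆ Finset.range Q := fun x hx =>
          Finset.mem_range.mpr (Finset.mem_Ico.mp hx).2
        calc ∑ i ∈ Finset.Ico n Q, ∑ j ∈ Finset.Ico n Q, μ (L i ∩ L j)
            ≤ ∑ i ∈ Finset.Ico n Q, ∑ j ∈ Finset.range Q, μ (L i ∩ L j) :=
              Finset.sum_le_sum fun i _ =>
                Finset.sum_le_sum_of_subset hIco
          _ ≤ ∑ i ∈ Finset.range Q, ∑ j ∈ Finset.range Q, μ (L i ∩ L j) :=
              Finset.sum_le_sum_of_subset hIco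
      have h3 : (∑ i ∈ Finset.Ico n Q, μ (L i)) ^ 2
          ≤ μ (U n) * (ENNReal.ofReal (1 / c) * S Q ^ 2) :=
        h1.trans (mul_le_mul_right (h2.trans hPQ) _)
      -- convert to real
      have hRfin : μ (U n) * (ENNReal.ofReal (1 / c) * S Q ^ 2) ≠ ⊤ :=
        ENNReal.mul_ne_top (measure_ne_top μ _)
          (ENNReal.mul_ne_top ENNReal.ofReal_ne_top (ENNReal.pow_ne_top (hSfin Q)))
      have hIcoQ : (∑ i ∈ Finset.Ico n Q, μ (L i)).toReal = a Q - b := by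
        have hsplit : S n + ∑ i ∈ Finset.Ico n Q, μ (L i) = S Q :=
          Finset.sum_range_add_sum_Ico _ hnQ
        have hIcofin : (∑ i ∈ Finset.Ico n Q, μ (L i)) ≠ ⊤ :=
          (ENNReal.sum_lt_top.mpr fun i _ => measure_lt_top μ _).ne
        have := congrArg ENNReal.toReal hsplit
        rw [ENNReal.toReal_add (hSfin n) hIcofin] at this
        rw [ha, hb]
        linarith [this]
      have hreal : (a Q - b) ^ 2 ≤ m * ((1 / c) * a Q ^ 2) := by
        have := ENNReal.toReal_mono hRfin h3
        rw [ENNReal.toReal_pow, hIcoQ, ENNReal.toReal_mul, ENNReal.toReal_mul,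
          ENNReal.toReal_pow, ENNReal.toReal_ofReal (by positivity)] at this
        exact this
      have h4 : c * (a Q - b) ^ 2 ≤ m * a Q ^ 2 := by
        have hmul := mul_le_mul_of_nonneg_left hreal hc.le
        calc c * (a Q - b) ^ 2 ≤ c * (m * ((1 / c) * a Q ^ 2)) := hmul
          _ = m * a Q ^ 2 := by field_simp; try ring
      have hrw : (1 - b / a Q) = (a Q - b) / a Q := by field_simp
      rw [hrw, div_pow, ← mul_div_assoc, div_le_iff₀ (by positivity)]
      exact h4
    exact le_of_tendsto htends hbound
  rw [hlimsup]
  have htend := tendsto_measure_iInter_atTop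
    (fun n => (hUmeas n).nullMeasurableSet) hanti ⟨0, measure_ne_top μ _⟩
  exact ge_of_tendsto' htend key |>.trans_eq rfl

/-- **Local divergence Borel–Cantelli Lemma (general form).** Suppose there is an increasing
function `f : (0,∞) → (0,∞)` with `f(x) → 0` as `x → 0` such that inside every open set `A` of
positive measure one can find sets `L i ⊆ E i ∩ A` whose measures sum to infinity and which are
quasi-independent on average with constant `1 / f(μ A)`.  Then the limsup of the `E i` has full
measure. -/
theorem local_divergence_borel_cantelli
    {Ω : Type*} [MetricSpace Ω] [MeasurableSpace Ω] [BorelSpace Ω]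
    (μ : Measure Ω) [IsProbabilityMeasure μ]
    (E : ℕ → Set Ω) (hE : ∀ i, MeasurableSet (E i))
    (f : ℝ → ℝ)
    (hf_pos : ∀ x : ℝ, 0 < x → 0 < f x)
    (hf_mono : MonotoneOn f (Set.Ioi (0 : ℝ)))
    (hf_lim : Tendsto f (nhdsWithin 0 (Set.Ioi (0 : ℝ))) (nhds 0))
    (h : ∀ A : Set Ω, IsOpen A → 0 < μ A →
      ∃ L : ℕ → Set Ω,
        (∀ i, MeasurableSet (L i)) ∧
        (∀ i, L i ⊆ E i ∩ A) ∧
        (∑' i, μ (L i) = ⊤) ∧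
        ∃ᶠ Q in atTop,
          ∑ s ∈ Finset.range Q, ∑ t ∈ Finset.range Q, μ (L s ∩ L t)
            ≤ ENNReal.ofReal (1 / f (μ A).toReal) *
                (∑ s ∈ Finset.range Q, μ (L s)) ^ 2) :
    μ (limsup E atTop) = 1 := by
  set S := limsup E atTop with hSdef
  have hSmeas : MeasurableSet S := MeasurableSet.measurableSet_limsup hE
  -- key claim
  have claim : ∀ A : Set Ω, IsOpen A → 0 < μ A →
      ENNReal.ofReal (f (μ A).toReal) ≤ μ (S ∩ A) := by
    intro A hAopen hApos
    obtain ⟨L, hLmeas, hLsub, hLdiv, hLfreq⟩ := h A hAopen hApos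
    have hc : 0 < f (μ A).toReal :=
      hf_pos _ (ENNReal.toReal_pos hApos.ne' (measure_ne_top μ A))
    have hL_limsup : limsup L atTop ⊆ S ∩ A := by
      have h1 : limsup L atTop ≤ limsup E atTop :=
        limsup_le_limsup (Filter.Eventually.of_forall fun i =>
          (hLsub i).trans Set.inter_subset_left)
      have h2 : limsup L atTop ≤ limsup (fun _ : ℕ => A) atTop :=
        limsup_le_limsup (Filter.Eventually.of_forall fun i =>
          (hLsub i).trans Set.inter_subset_right)
      rw [limsup_const] at h2
      exact Set.subset_inter h1 h2
    calc ENNReal.ofReal (f (μ A).toReal) ≤ μ (limsup L atTop) :=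
          limsup_measure_ge μ L hLmeas hLdiv hc hLfreq
      _ ≤ μ (S ∩ A) := measure_mono hL_limsup
  -- conclude
  by_contra hne
  have hlt : μ S < 1 := lt_of_le_of_ne prob_le_one hne
  have hcomp_pos : 0 < μ Sᶜ := by
    rw [prob_compl_eq_one_sub hSmeas]
    exact tsub_pos_of_lt hlt
  set δ : ℝ := f (μ Sᶜ).toReal with hδdef
  have hδ : 0 < δ :=
    hf_pos _ (ENNReal.toReal_pos hcomp_pos.ne' (measure_ne_top μ _))
  obtain ⟨A, hA_sup, hAopen, hμA⟩ := Sᶜ.exists_isOpen_lt_of_lt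
    (μ Sᶜ + ENNReal.ofReal (δ / 2))
    (ENNReal.lt_add_right (measure_ne_top μ _)
      (by simp [ENNReal.ofReal_eq_zero]; linarith))
  have hApos : 0 < μ A := hcomp_pos.trans_le (measure_mono hA_sup)
  have hmono : δ ≤ f (μ A).toReal := by
    refine hf_mono (Set.mem_Ioi.mpr
        (ENNReal.toReal_pos hcomp_pos.ne' (measure_ne_top μ _)))
      (Set.mem_Ioi.mpr (ENNReal.toReal_pos hApos.ne' (measure_ne_top μ _))) ?_
    exact ENNReal.toReal_mono (measure_ne_top μ A) (measure_mono hA_sup)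
  have hkey : ENNReal.ofReal δ ≤ μ (S ∩ A) :=
    (ENNReal.ofReal_le_ofReal hmono).trans (claim A hAopen hApos)
  have hsum : μ Sᶜ + μ (S ∩ A) ≤ μ A := by
    rw [← measure_union (disjoint_compl_left.mono_right Set.inter_subset_left)
      (hSmeas.inter hAopen.measurableSet)]
    exact measure_mono (Set.union_subset hA_sup Set.inter_subset_right)
  have : μ Sᶜ + ENNReal.ofReal δ < μ Sᶜ + ENNReal.ofReal (δ / 2) :=
    lt_of_le_of_lt (le_trans (add_le_add_right hkey _) hsum) hμA
  have hcontr : ENNReal.ofReal δ < ENNReal.ofReal (δ / 2) :=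
    (ENNReal.add_lt_add_iff_left (measure_ne_top μ _)).mp this
  rw [ENNReal.ofReal_lt_ofReal_iff (by linarith)] at hcontr
  linarith
end

section
/- Let (Ω, 𝒜, μ, d) be a metric measure space with a doubling Borel probability measure μ with doubling constant λ. Let {B_i}_{i∈ℕ} be a sequence of balls in Ω with diam(B_i) → 0 as i → ∞ satisfying condition (†) with constants a, b > 1. If μ(limsup_{i→∞} B_i ∩ B) = μ(B) for every ball B in Ω, then for every ball B centred in supp μ and every G ∈ ℕ there is a finite subcollection 𝒦_{G,B} ⊆ {B_i : i ≥ G} of pairwise disjoint balls contained in B such that μ(⋃_{L∈𝒦_{G,B}} L) ≥ κ μ(B), where κ := 1/(2 λ^{k+1} b) and k := max{1, ⌈log₂(6/(a−1))⌉}. -/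
open MeasureTheory Filter Set Metric
open scoped ENNReal

/-- The support of a measure on a metric space: the set of points all of whose
open balls have positive measure. -/
def measSupp {Ω : Type*} [PseudoMetricSpace Ω] [MeasurableSpace Ω]
    (μ : MeasureTheory.Measure Ω) : Set Ω :=
  {x | ∀ ε : ℝ, 0 < ε → 0 < μ (Metric.ball x ε)}

/-- **Proposition 1, (B) ⇒ (C).** Let `μ` be a doubling Borel probability measure with
doubling constant `lam`, and `B i = ball (x i) (r i)` a sequence of balls with radii tending
to `0` satisfying condition (†) with constants `a, b > 1`.  If `μ(limsup Bᵢ ∩ B) = μ(B)` for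
every ball `B`, then within any ball `B` centred in the support of `μ` and for any `G` one can
find a finite disjoint subcollection of `{B i : i ≥ G}` of balls contained in `B` whose union
has measure at least `κ μ(B)`, where `κ = 1/(2 lam^(k+1) b)` and
`k = max {1, ⌈log₂(6/(a-1))⌉}`. -/
theorem full_on_balls_implies_finite_disjoint_subcollections
    {Ω : Type*} [MetricSpace Ω] [MeasurableSpace Ω] [BorelSpace Ω]
    (μ : Measure Ω) [IsProbabilityMeasure μ]
    (lam : ℝ) (hlam : 1 ≤ lam) (rd : ℝ) (hrd : 0 < rd)
    (hdoub : ∀ x ∈ measSupp μ, ∀ ρ : ℝ, 0 < ρ → ρ < rd →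
      μ (ball x (2 * ρ)) ≤ ENNReal.ofReal lam * μ (ball x ρ))
    (x : ℕ → Ω) (r : ℕ → ℝ) (hr : ∀ i, 0 < r i)
    (hdiam : Tendsto r atTop (nhds 0))
    (a b : ℝ) (ha : 1 < a) (hb : 1 < b)
    (hdagger : ∀ᶠ i in atTop,
      μ (ball (x i) (a * r i)) ≤ ENNReal.ofReal b * μ (ball (x i) (r i)))
    (hfull : ∀ (z : Ω) (ρ : ℝ), 0 < ρ →
      μ (limsup (fun i => ball (x i) (r i)) atTop ∩ ball z ρ) = μ (ball z ρ)) :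
    ∀ y ∈ measSupp μ, ∀ ρ : ℝ, 0 < ρ → ∀ G : ℕ,
      ∃ F : Finset ℕ,
        (∀ i ∈ F, G ≤ i) ∧
        (∀ i ∈ F, ∀ j ∈ F, i ≠ j → Disjoint (ball (x i) (r i)) (ball (x j) (r j))) ∧
        (∀ i ∈ F, ball (x i) (r i) ⊆ ball y ρ) ∧
        ENNReal.ofReal
            (1 / (2 * lam ^ (max 1 (⌈Real.logb 2 (6 / (a - 1))⌉.toNat) + 1) * b)) *
            μ (ball y ρ)
          ≤ μ (⋃ i ∈ F, ball (x i) (r i)) := by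
  classical
  intro y hy ρ hρ G
  set k : ℕ := max 1 (⌈Real.logb 2 (6 / (a - 1))⌉.toNat) with hkdef
  set κ : ℝ≥0∞ := ENNReal.ofReal (1 / (2 * lam ^ (k + 1) * b)) with hκdef
  have ha1 : (0:ℝ) < a - 1 := by linarith
  have hlam0 : (0:ℝ) < lam := by linarith
  -- key numerical fact: 6 ≤ 2^k * (a-1)
  have h6 : (6:ℝ) ≤ 2 ^ k * (a - 1) := by
    have hx6 : (0:ℝ) < 6 / (a - 1) := by positivity
    have hlogb : Real.logb 2 (6 / (a - 1)) ≤ (k : ℝ) := by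
      have h1 : Real.logb 2 (6 / (a - 1)) ≤ (⌈Real.logb 2 (6 / (a - 1))⌉ : ℝ) := Int.le_ceil _
      have h2 : (⌈Real.logb 2 (6 / (a - 1))⌉ : ℝ) ≤ ((⌈Real.logb 2 (6 / (a - 1))⌉.toNat : ℤ) : ℝ) := by
        exact_mod_cast Int.self_le_toNat _
      have h3 : (⌈Real.logb 2 (6 / (a - 1))⌉.toNat : ℝ) ≤ (k : ℝ) := by
        exact_mod_cast le_max_right 1 _
      push_cast at h2 ⊢
      linarith
    have := (Real.logb_le_iff_le_rpow (by norm_num : (1:ℝ) < 2) hx6).1 hlogb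
    rw [Real.rpow_natCast] at this
    rw [div_le_iff₀ ha1] at this
    linarith
  -- trivial case: the ball is null
  by_cases hm0 : μ (ball y ρ) = 0
  · refine ⟨∅, by simp, by simp, by simp, by simp [hm0]⟩
  have hmfin : μ (ball y ρ) ≠ ⊤ := measure_ne_top μ _
  set m : ℝ≥0∞ := μ (ball y ρ) with hmdef
  -- choose the inner ball
  have hmono : Monotone (fun n : ℕ => ball y (ρ - 1 / ((n:ℝ) + 1))) := by
    intro p q hpq
    apply ball_subset_ball
    have : 1 / ((q:ℝ) + 1) ≤ 1 / ((p:ℝ) + 1) := by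
      apply one_div_le_one_div_of_le (by positivity)
      have : (p:ℝ) ≤ (q:ℝ) := Nat.cast_le.mpr hpq
      linarith
    linarith
  have hUnion : (⋃ n : ℕ, ball y (ρ - 1 / ((n:ℝ) + 1))) = ball y ρ := by
    ext w
    simp only [mem_iUnion, mem_ball]
    constructor
    · rintro ⟨n, hn⟩
      have : (0:ℝ) < 1 / ((n:ℝ) + 1) := by positivity
      linarith
    · intro hw
      obtain ⟨n, hn⟩ := exists_nat_one_div_lt (show (0:ℝ) < ρ - dist w y by linarith)
      exact ⟨n, by linarith⟩
  have htend := tendsto_measure_iUnion_atTop (μ := μ) hmono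
  rw [hUnion] at htend
  have h34 : ENNReal.ofReal (3/4) * m < m := by
    have : ENNReal.ofReal (3/4) * m < 1 * m :=
      (ENNReal.mul_lt_mul_iff_left hm0 hmfin).2 (by simp; norm_num)
    simpa using this
  have hev1 : ∀ᶠ n : ℕ in atTop,
      ENNReal.ofReal (3/4) * m < μ (ball y (ρ - 1 / ((n:ℝ) + 1))) :=
    (tendsto_order.1 htend).1 _ h34
  have hev2 : ∀ᶠ n : ℕ in atTop, 1 / ((n:ℝ) + 1) < ρ :=
    tendsto_one_div_add_atTop_nhds_zero_nat.eventually (gt_mem_nhds hρ)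
  obtain ⟨n, hn1, hn2⟩ := (hev1.and hev2).exists
  set ε : ℝ := 1 / ((n:ℝ) + 1) with hεdef
  have hε : 0 < ε := by positivity
  have hερ : ε < ρ := hn2
  have hinner : ENNReal.ofReal (3/4) * m < μ (ball y (ρ - ε)) := hn1
  -- choose the threshold index
  set c₁ : ℝ := min (ε / 2) (rd / (2 ^ k * (a - 1))) with hc₁def
  have hc₁ : 0 < c₁ := lt_min (by positivity) (by positivity)
  have hevr : ∀ᶠ i in atTop, r i < c₁ := hdiam.eventually (gt_mem_nhds hc₁)
  obtain ⟨N, hN⟩ := eventually_atTop.1 (hdagger.and hevr)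
  set G' : ℕ := max G N with hG'def
  -- the collection of balls
  set t : Set ℕ := {i | G' ≤ i ∧ (ball (x i) (r i) ∩ ball y (ρ - ε)).Nonempty ∧
      (ball (x i) (r i) ∩ measSupp μ).Nonempty} with htdef
  have hrc₁ : ∀ i ∈ t, r i < c₁ := fun i hi => (hN i (le_trans (le_max_right G N) hi.1)).2
  have hsub : ∀ i ∈ t, ball (x i) (r i) ⊆ ball y ρ := by
    intro i hi v hv
    obtain ⟨w, hw1, hw2⟩ := hi.2.1
    rw [mem_ball] at hv hw1 hw2 ⊢
    have h1 : dist v y ≤ dist v (x i) + dist (x i) w + dist w y := by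
      calc dist v y ≤ dist v w + dist w y := dist_triangle _ _ _
        _ ≤ dist v (x i) + dist (x i) w + dist w y := by
            have := dist_triangle v (x i) w; linarith
    have h2 : dist (x i) w < r i := by rw [dist_comm]; exact hw1
    have h3 : r i < ε / 2 := lt_of_lt_of_le (hrc₁ i hi) (min_le_left _ _)
    linarith
  -- the set of points not in the support covered by limsup is null
  have hnull : μ (limsup (fun i => ball (x i) (r i)) atTop \ measSupp μ) = 0 := by
    set Z : Set ℕ := {i | μ (ball (x i) (r i)) = 0} with hZdef
    have hsubZ : limsup (fun i => ball (x i) (r i)) atTop \ measSupp μ ⊆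
        ⋃ i ∈ Z, ball (x i) (r i) := by
      rintro w ⟨hw1, hw2⟩
      have hw2' : ∃ εw : ℝ, 0 < εw ∧ μ (ball w εw) = 0 := by
        by_contra h
        push_neg at h
        exact hw2 (fun εw hεw => pos_iff_ne_zero.2 (h εw hεw))
      obtain ⟨εw, hεwpos, hwnull'⟩ := hw2'
      rw [mem_limsup_iff_frequently_mem] at hw1
      have hev : ∀ᶠ i in atTop, r i < εw / 2 :=
        hdiam.eventually (gt_mem_nhds (half_pos hεwpos))
      obtain ⟨i, hwi, hri⟩ := (hw1.and_eventually hev).exists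
      have hiZ : i ∈ Z := by
        have hss : ball (x i) (r i) ⊆ ball w εw := by
          intro v hv
          rw [mem_ball] at hv hwi ⊢
          have := dist_triangle v (x i) w
          rw [dist_comm w (x i)] at hwi
          linarith
        exact measure_mono_null hss hwnull'
      exact mem_biUnion hiZ hwi
    refine measure_mono_null hsubZ ?_
    refine le_antisymm ?_ zero_le
    calc μ (⋃ i ∈ Z, ball (x i) (r i)) ≤ ∑' i : Z, μ (ball (x i) (r i)) :=
          measure_biUnion_le μ (Z.to_countable) _
      _ = ∑' _ : Z, (0:ℝ≥0∞) := tsum_congr (fun i => i.2)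
      _ = 0 := tsum_zero
  -- coverage of the inner ball by the collection
  have hcover : μ (ball y (ρ - ε)) ≤ μ (⋃ i ∈ t, ball (x i) (r i)) := by
    have hss : limsup (fun i => ball (x i) (r i)) atTop ∩ ball y (ρ - ε) ⊆
        (⋃ i ∈ t, ball (x i) (r i)) ∪
          (limsup (fun i => ball (x i) (r i)) atTop \ measSupp μ) := by
      rintro w ⟨hw1, hw2⟩
      by_cases hwS : w ∈ measSupp μ
      · left
        rw [mem_limsup_iff_frequently_mem] at hw1
        obtain ⟨i, hiG, hwi⟩ := (frequently_atTop.1 hw1) G'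
        have hit : i ∈ t := ⟨hiG, ⟨w, hwi, hw2⟩, ⟨w, hwi, hwS⟩⟩
        exact mem_biUnion hit hwi
      · right; exact ⟨hw1, hwS⟩
    calc μ (ball y (ρ - ε))
        = μ (limsup (fun i => ball (x i) (r i)) atTop ∩ ball y (ρ - ε)) :=
          (hfull y (ρ - ε) (by linarith)).symm
      _ ≤ μ ((⋃ i ∈ t, ball (x i) (r i)) ∪
            (limsup (fun i => ball (x i) (r i)) atTop \ measSupp μ)) := measure_mono hss
      _ ≤ μ (⋃ i ∈ t, ball (x i) (r i)) +
            μ (limsup (fun i => ball (x i) (r i)) atTop \ measSupp μ) := measure_union_le _ _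
      _ = μ (⋃ i ∈ t, ball (x i) (r i)) := by rw [hnull, add_zero]
  -- Vitali covering lemma
  obtain ⟨u, hut, hud, hu⟩ :=
    Vitali.exists_disjoint_subfamily_covering_enlargement
      (fun i => ball (x i) (r i)) t r 2 one_lt_two (fun i _ => (hr i).le)
      c₁ (fun i hi => (hrc₁ i hi).le) (fun i _ => ⟨x i, mem_ball_self (hr i)⟩)
  have hcov5 : (⋃ i ∈ t, ball (x i) (r i)) ⊆ ⋃ j ∈ u, ball (x j) (5 * r j) := by
    rintro w hw
    rw [mem_iUnion₂] at hw
    obtain ⟨i, hi, hwi⟩ := hw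
    obtain ⟨j, hju, ⟨v, hv1, hv2⟩, hij⟩ := hu i hi
    refine mem_biUnion hju ?_
    rw [mem_ball] at hwi hv1 hv2 ⊢
    have h1 : dist w (x j) ≤ dist w (x i) + dist (x i) v + dist v (x j) := by
      calc dist w (x j) ≤ dist w v + dist v (x j) := dist_triangle _ _ _
        _ ≤ dist w (x i) + dist (x i) v + dist v (x j) := by
            have := dist_triangle w (x i) v; linarith
    have h2 : dist (x i) v < r i := by rw [dist_comm]; exact hv1
    linarith
  -- per-ball measure bound
  set c' : ℝ≥0∞ := ENNReal.ofReal lam ^ k * ENNReal.ofReal b with hc'def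
  have hball : ∀ j ∈ u, μ (ball (x j) (5 * r j)) ≤ c' * μ (ball (x j) (r j)) := by
    intro j hju
    have hjt : j ∈ t := hut hju
    obtain ⟨z, hz1, hz2⟩ := hjt.2.2
    rw [mem_ball] at hz1
    have hrj : 0 < r j := hr j
    have hrjc : r j < rd / (2 ^ k * (a - 1)) := lt_of_lt_of_le (hrc₁ j hjt) (min_le_right _ _)
    set s : ℝ := (a - 1) * r j with hsdef
    have hs : 0 < s := mul_pos ha1 hrj
    -- iterated doubling at z
    have hiter : ∀ p : ℕ, 2 ^ p * s < 2 * rd →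
        μ (ball z (2 ^ p * s)) ≤ ENNReal.ofReal lam ^ p * μ (ball z s) := by
      intro p
      induction p with
      | zero => intro _; simp
      | succ q ih =>
          intro hlt
          have hq2 : (2:ℝ) ^ (q+1) = 2 ^ q * 2 := by ring
          have h1 : 2 ^ q * s < rd := by
            rw [hq2] at hlt; nlinarith
          have h0 : (0:ℝ) < 2 ^ q * s := by positivity
          calc μ (ball z (2 ^ (q+1) * s)) = μ (ball z (2 * (2 ^ q * s))) := by
                rw [show (2:ℝ) ^ (q+1) * s = 2 * (2 ^ q * s) by ring]
            _ ≤ ENNReal.ofReal lam * μ (ball z (2 ^ q * s)) := hdoub z hz2 _ h0 h1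
            _ ≤ ENNReal.ofReal lam * (ENNReal.ofReal lam ^ q * μ (ball z s)) :=
                mul_le_mul_right (ih (by linarith)) _
            _ = ENNReal.ofReal lam ^ (q+1) * μ (ball z s) := by ring
    have hks : 2 ^ k * s < 2 * rd := by
      have h2k : (0:ℝ) < 2 ^ k * (a - 1) := by positivity
      have : 2 ^ k * (a - 1) * r j < rd := (lt_div_iff₀' h2k).mp hrjc
      calc 2 ^ k * s = 2 ^ k * (a - 1) * r j := by ring
        _ < rd := this
        _ < 2 * rd := by linarith
    have hss1 : ball (x j) (5 * r j) ⊆ ball z (2 ^ k * s) := by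
      intro v hv
      rw [mem_ball] at hv ⊢
      have h1 : dist v z ≤ dist v (x j) + dist (x j) z := dist_triangle _ _ _
      rw [dist_comm (x j) z] at h1
      have h6' : 6 * r j ≤ 2 ^ k * s := by
        rw [hsdef]; nlinarith
      linarith
    have hss2 : ball z s ⊆ ball (x j) (a * r j) := by
      intro v hv
      rw [mem_ball] at hv ⊢
      have h1 : dist v (x j) ≤ dist v z + dist z (x j) := dist_triangle _ _ _
      rw [hsdef] at hv
      linarith
    have hdag : μ (ball (x j) (a * r j)) ≤ ENNReal.ofReal b * μ (ball (x j) (r j)) :=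
      (hN j (le_trans (le_max_right G N) hjt.1)).1
    calc μ (ball (x j) (5 * r j)) ≤ μ (ball z (2 ^ k * s)) := measure_mono hss1
      _ ≤ ENNReal.ofReal lam ^ k * μ (ball z s) := hiter k hks
      _ ≤ ENNReal.ofReal lam ^ k * μ (ball (x j) (a * r j)) :=
          mul_le_mul_right (measure_mono hss2) _
      _ ≤ ENNReal.ofReal lam ^ k * (ENNReal.ofReal b * μ (ball (x j) (r j))) :=
          mul_le_mul_right hdag _
      _ = c' * μ (ball (x j) (r j)) := by rw [hc'def]; ring
  -- summing up
  set g : ℕ → ℝ≥0∞ := u.indicator (fun i => μ (ball (x i) (r i))) with hgdef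
  set T : ℝ≥0∞ := ∑' i, g i with hTdef
  have hsum : μ (ball y (ρ - ε)) ≤ c' * T := by
    calc μ (ball y (ρ - ε)) ≤ μ (⋃ i ∈ t, ball (x i) (r i)) := hcover
      _ ≤ μ (⋃ j ∈ u, ball (x j) (5 * r j)) := measure_mono hcov5
      _ ≤ ∑' j : u, μ (ball (x j) (5 * r j)) := measure_biUnion_le μ (u.to_countable) _
      _ = ∑' j, u.indicator (fun j => μ (ball (x j) (5 * r j))) j :=
          tsum_subtype u (fun j => μ (ball (x j) (5 * r j)))
      _ ≤ ∑' j, c' * g j := by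
          apply ENNReal.tsum_le_tsum
          intro j
          by_cases hju : j ∈ u
          · simp only [hgdef, indicator_of_mem hju]
            exact hball j hju
          · simp [hgdef, indicator_of_notMem hju]
      _ = c' * T := by rw [hTdef, ENNReal.tsum_mul_left]
  -- arithmetic: κ * m < T
  have hc'0 : c' ≠ 0 := by
    apply mul_ne_zero
    · exact pow_ne_zero _ (by simp [ENNReal.ofReal_eq_zero]; linarith)
    · simp [ENNReal.ofReal_eq_zero]; linarith
  have hc'top : c' ≠ ⊤ := by
    apply ENNReal.mul_ne_top
    · exact ENNReal.pow_ne_top ENNReal.ofReal_ne_top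
    · exact ENNReal.ofReal_ne_top
  have hκc' : κ * c' ≤ ENNReal.ofReal (3/4) := by
    have hc'eq : c' = ENNReal.ofReal (lam ^ k * b) := by
      rw [hc'def, ENNReal.ofReal_mul (by positivity), ENNReal.ofReal_pow hlam0.le]
    rw [hκdef, hc'eq, ← ENNReal.ofReal_mul (by positivity)]
    apply ENNReal.ofReal_le_ofReal
    have heq : 1 / (2 * lam ^ (k + 1) * b) * (lam ^ k * b) = 1 / (2 * lam) := by
      rw [pow_succ]
      field_simp
    rw [heq]
    have : 1 / (2 * lam) ≤ 1 / 2 := by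
      apply one_div_le_one_div_of_le (by norm_num)
      linarith
    linarith
  have hκmT : κ * m < T := by
    have h1 : κ * m * c' ≤ ENNReal.ofReal (3/4) * m := by
      calc κ * m * c' = (κ * c') * m := by ring
        _ ≤ ENNReal.ofReal (3/4) * m := mul_le_mul_left hκc' m
    have h2 : ENNReal.ofReal (3/4) * m < c' * T := lt_of_lt_of_le hinner hsum
    have h3 : κ * m * c' < T * c' := by
      calc κ * m * c' ≤ ENNReal.ofReal (3/4) * m := h1
        _ < c' * T := h2
        _ = T * c' := mul_comm _ _
    exact (ENNReal.mul_lt_mul_iff_left hc'0 hc'top).1 h3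
  -- extract a finite subfamily
  rw [hTdef, ENNReal.tsum_eq_iSup_sum] at hκmT
  obtain ⟨F0, hF0⟩ := lt_iSup_iff.1 hκmT
  set F : Finset ℕ := F0.filter (fun i => i ∈ u) with hFdef
  have hFu : ∀ i ∈ F, i ∈ u := by
    intro i hi
    exact (Finset.mem_filter.1 hi).2
  have hFt : ∀ i ∈ F, i ∈ t := fun i hi => hut (hFu i hi)
  have hsumF : ∑ i ∈ F0, g i = ∑ i ∈ F, μ (ball (x i) (r i)) := by
    rw [hFdef, Finset.sum_filter]
    apply Finset.sum_congr rfl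
    intro i _
    by_cases hiu : i ∈ u
    · simp [hgdef, indicator_of_mem hiu, hiu]
    · simp [hgdef, indicator_of_notMem hiu, hiu]
  refine ⟨F, ?_, ?_, ?_, ?_⟩
  · intro i hi
    exact le_trans (le_max_left G N) (hFt i hi).1
  · intro i hi j hj hij
    exact hud (hFu i hi) (hFu j hj) hij
  · intro i hi
    exact hsub i (hFt i hi)
  · have hdisj : (↑F : Set ℕ).PairwiseDisjoint (fun i => ball (x i) (r i)) := by
      apply hud.subset
      intro i hi
      exact hFu i hi
    have hUF : μ (⋃ i ∈ F, ball (x i) (r i)) = ∑ i ∈ F, μ (ball (x i) (r i)) :=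
      measure_biUnion_finset hdisj (fun i _ => measurableSet_ball)
    rw [hUF, ← hsumF]
    exact (le_of_lt hF0)
end

section
/- Let (Ω, 𝒜, μ, d) be a metric measure space with a Borel probability measure μ, let {B_i}_{i∈ℕ} be a sequence of balls in Ω, let B be a ball centred in supp μ, and let κ > 0 be a constant. Suppose that for every G ∈ ℕ there is a finite subcollection 𝒦_{G,B} ⊆ {B_i : i ≥ G} of pairwise disjoint balls contained in B such that, writing E_{G,B} := ⋃_{L∈𝒦_{G,B}} L, one has μ(E_{G,B}) ≥ κ μ(B) and μ(E_{G,B} ∩ E_{G',B}) ≤ (1/(μ(B) κ²)) μ(E_{G,B}) μ(E_{G',B}) for all G, G' ∈ ℕ. Then there is a subsequence {L_{i,B}}_{i∈ℕ} of {B_i}_{i∈ℕ} of balls contained in B with ∑_{i=1}^∞ μ(L_{i,B}) = ∞ and, for infinitely many Q ∈ ℕ, ∑_{s,t=1}^Q μ(L_{s,B} ∩ L_{t,B}) ≤ (1/(μ(B) κ²)) (∑_{s=1}^Q μ(L_{s,B}))². -/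
open MeasureTheory Filter Set Metric
open scoped ENNReal

/-- **Proposition 1, (C) & (D) ⇒ (E).** Fix a ball `B = ball y ρ` centred in the support of
`μ`.  Suppose for every `G` the finite index set `K G ⊆ {i : i ≥ G}` picks out pairwise
disjoint balls contained in `B` whose union `E_G` satisfies `μ(E_G) ≥ κ μ(B)` and
`μ(E_G ∩ E_{G'}) ≤ (μ(B) κ²)⁻¹ μ(E_G) μ(E_{G'})` for all `G, G'`.  Then there is a subsequence
of the balls `B i` contained in `B` whose measures sum to infinity and which is
quasi-independent on average with constant `(μ(B) κ²)⁻¹`. -/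
theorem pairwise_quasi_independence_implies_subsequence
    {Ω : Type*} [MetricSpace Ω] [MeasurableSpace Ω] [BorelSpace Ω]
    (μ : Measure Ω) [IsProbabilityMeasure μ]
    (x : ℕ → Ω) (r : ℕ → ℝ) (hr : ∀ i, 0 < r i)
    (y : Ω) (hy : y ∈ measSupp μ) (ρ : ℝ) (hρ : 0 < ρ)
    (κ : ℝ) (hκ : 0 < κ)
    (K : ℕ → Finset ℕ)
    (hK : ∀ G : ℕ,
      (∀ i ∈ K G, G ≤ i) ∧
      (∀ i ∈ K G, ∀ j ∈ K G, i ≠ j → Disjoint (ball (x i) (r i)) (ball (x j) (r j))) ∧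
      (∀ i ∈ K G, ball (x i) (r i) ⊆ ball y ρ) ∧
      ENNReal.ofReal κ * μ (ball y ρ) ≤ μ (⋃ i ∈ K G, ball (x i) (r i)))
    (hKpair : ∀ G G' : ℕ,
      μ ((⋃ i ∈ K G, ball (x i) (r i)) ∩ ⋃ i ∈ K G', ball (x i) (r i))
        ≤ (μ (ball y ρ) * ENNReal.ofReal (κ ^ 2))⁻¹ *
            (μ (⋃ i ∈ K G, ball (x i) (r i)) * μ (⋃ i ∈ K G', ball (x i) (r i)))) :
    ∃ φ : ℕ → ℕ, StrictMono φ ∧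
      (∀ i, ball (x (φ i)) (r (φ i)) ⊆ ball y ρ) ∧
      (∑' i, μ (ball (x (φ i)) (r (φ i))) = ⊤) ∧
      ∃ᶠ Q in atTop,
        ∑ s ∈ Finset.range Q, ∑ t ∈ Finset.range Q,
            μ (ball (x (φ s)) (r (φ s)) ∩ ball (x (φ t)) (r (φ t)))
          ≤ (μ (ball y ρ) * ENNReal.ofReal (κ ^ 2))⁻¹ *
              (∑ s ∈ Finset.range Q, μ (ball (x (φ s)) (r (φ s)))) ^ 2 := by
  classical
  have hμB : (0 : ℝ≥0∞) < μ (ball y ρ) := hy ρ hρ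
  set ε : ℝ≥0∞ := ENNReal.ofReal κ * μ (ball y ρ) with hεdef
  have hε0 : ε ≠ 0 := by
    simp only [hεdef, Ne, mul_eq_zero, ENNReal.ofReal_eq_zero, not_or, not_le]
    exact ⟨hκ, hμB.ne'⟩
  have hεtop : ε ≠ ⊤ := by
    simp only [hεdef, Ne, ENNReal.mul_eq_top]
    push_neg
    exact ⟨fun _ => measure_ne_top μ _, fun h => absurd h ENNReal.ofReal_ne_top⟩
  -- each K G is nonempty
  have hKne : ∀ G, (K G).Nonempty := by
    intro G
    rw [Finset.nonempty_iff_ne_empty]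
    intro h
    have h4 := (hK G).2.2.2
    rw [h] at h4
    simp only [Finset.notMem_empty, Set.iUnion_of_empty, Set.iUnion_empty,
      measure_empty, nonpos_iff_eq_zero] at h4
    exact hε0 h4
  -- the recursively defined sequence of generations
  let Gs : ℕ → ℕ := fun n => Nat.rec 0 (fun _ Gn => (K Gn).max' (hKne Gn) + 1) n
  have hGs_succ : ∀ n, Gs (n + 1) = (K (Gs n)).max' (hKne _) + 1 := fun n => rfl
  have hlow : ∀ n, ∀ j ∈ K (Gs n), Gs n ≤ j := fun n => (hK (Gs n)).1
  have hhigh : ∀ n, ∀ j ∈ K (Gs n), j < Gs (n + 1) := by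
    intro n j hj
    rw [hGs_succ]
    exact Nat.lt_succ_of_le (Finset.le_max' _ _ hj)
  have hGmono : StrictMono Gs := by
    apply strictMono_nat_of_lt_succ
    intro n
    obtain ⟨j, hj⟩ := hKne (Gs n)
    exact lt_of_le_of_lt (hlow n j hj) (hhigh n j hj)
  -- blocks are disjoint
  have hblock : ∀ {n m : ℕ}, n < m → Disjoint (K (Gs n)) (K (Gs m)) := by
    intro n m hnm
    rw [Finset.disjoint_left]
    intro j hjn hjm
    have h1 : j < Gs (n + 1) := hhigh n j hjn
    have h2 : Gs m ≤ j := hlow m j hjm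
    have h3 : Gs (n + 1) ≤ Gs m := hGmono.monotone hnm
    omega
  have hblockPD : ∀ N : ℕ, (↑(Finset.range N) : Set ℕ).PairwiseDisjoint
      (fun n => K (Gs n)) := by
    intro N n _ m _ hnm
    rcases lt_or_gt_of_ne hnm with h | h
    · exact hblock h
    · exact (hblock h).symm
  -- the index predicate
  set p : ℕ → Prop := fun j => ∃ n, j ∈ K (Gs n) with hpdef
  have hp_inf : (setOf p).Infinite := by
    apply Set.infinite_of_not_bddAbove
    rintro ⟨b, hb⟩
    obtain ⟨j, hj⟩ := hKne (Gs (b + 1))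
    have h1 : Gs (b + 1) ≤ j := hlow (b + 1) j hj
    have h2 : b + 1 ≤ Gs (b + 1) := hGmono.le_apply
    have h3 : j ≤ b := hb ⟨b + 1, hj⟩
    omega
  set φ : ℕ → ℕ := Nat.nth p with hφdef
  have hφmono : StrictMono φ := Nat.nth_strictMono hp_inf
  have hφmem : ∀ i, p (φ i) := fun i => Nat.nth_mem_of_infinite hp_inf i
  -- the blocks as finsets of indices
  set T : ℕ → Finset ℕ := fun N => (Finset.range N).biUnion (fun n => K (Gs n)) with hTdef
  have hTmem : ∀ N j, j ∈ T N ↔ p j ∧ j < Gs N := by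
    intro N j
    simp only [hTdef, Finset.mem_biUnion, Finset.mem_range]
    constructor
    · rintro ⟨n, hn, hj⟩
      refine ⟨⟨n, hj⟩, lt_of_lt_of_le (hhigh n j hj) (hGmono.monotone hn)⟩
    · rintro ⟨⟨n, hj⟩, hlt⟩
      refine ⟨n, ?_, hj⟩
      by_contra h
      push_neg at h
      exact absurd (le_trans (hGmono.monotone h) (hlow n j hj)) (not_le.2 hlt)
  -- the image identity
  have hIm : ∀ N, (Finset.range (Nat.count p (Gs N))).image φ = T N := by
    intro N
    ext j
    simp only [Finset.mem_image, Finset.mem_range]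
    constructor
    · rintro ⟨s, hs, rfl⟩
      exact (hTmem N _).2 ⟨hφmem s, Nat.nth_lt_of_lt_count hs⟩
    · intro hj
      obtain ⟨hpj, hlt⟩ := (hTmem N j).1 hj
      refine ⟨Nat.count p j, ?_, Nat.nth_count hpj⟩
      have h1 : Nat.count p (j + 1) ≤ Nat.count p (Gs N) :=
        Nat.count_monotone p hlt
      rw [Nat.count_succ, if_pos hpj] at h1
      omega
  have hsum : ∀ (N : ℕ) (f : ℕ → ℝ≥0∞),
      ∑ s ∈ Finset.range (Nat.count p (Gs N)), f (φ s) = ∑ j ∈ T N, f j := by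
    intro N f
    rw [← hIm N, Finset.sum_image]
    intro a _ b _ hab
    exact hφmono.injective hab
  -- measurability of balls
  have hmeas : ∀ i, MeasurableSet (ball (x i) (r i)) := fun i => measurableSet_ball
  -- measure of each block union
  have hEsum : ∀ n, ∑ j ∈ K (Gs n), μ (ball (x j) (r j))
      = μ (⋃ i ∈ K (Gs n), ball (x i) (r i)) := by
    intro n
    refine (measure_biUnion_finset ?_ fun b _ => hmeas b).symm
    intro i hi j hj hij
    exact (hK (Gs n)).2.1 i hi j hj hij
  -- cross sums within a pair of blocks
  have hcross : ∀ n m, ∑ j ∈ K (Gs n), ∑ k ∈ K (Gs m),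
        μ (ball (x j) (r j) ∩ ball (x k) (r k))
      = μ ((⋃ i ∈ K (Gs n), ball (x i) (r i)) ∩ ⋃ i ∈ K (Gs m), ball (x i) (r i)) := by
    intro n m
    have hinner : ∀ j, ∑ k ∈ K (Gs m), μ (ball (x j) (r j) ∩ ball (x k) (r k))
        = μ (ball (x j) (r j) ∩ ⋃ i ∈ K (Gs m), ball (x i) (r i)) := by
      intro j
      rw [Set.inter_iUnion₂]
      refine (measure_biUnion_finset ?_ fun b _ => (hmeas j).inter (hmeas b)).symm
      intro a ha b hb hab
      exact Disjoint.mono inter_subset_right inter_subset_right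
        ((hK (Gs m)).2.1 a ha b hb hab)
    simp_rw [hinner]
    rw [Set.iUnion₂_inter]
    refine (measure_biUnion_finset ?_ fun b _ => (hmeas b).inter
      ((K (Gs m)).measurableSet_biUnion fun i _ => hmeas i)).symm
    intro a ha b hb hab
    exact Disjoint.mono inter_subset_left inter_subset_left
      ((hK (Gs n)).2.1 a ha b hb hab)
  -- sum over T N of measures
  have hTsum1 : ∀ N, ∑ j ∈ T N, μ (ball (x j) (r j))
      = ∑ n ∈ Finset.range N, μ (⋃ i ∈ K (Gs n), ball (x i) (r i)) := by
    intro N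
    rw [hTdef, Finset.sum_biUnion (hblockPD N)]
    exact Finset.sum_congr rfl fun n _ => hEsum n
  -- double sum over T N of intersections
  have hTsum2 : ∀ N, ∑ j ∈ T N, ∑ k ∈ T N, μ (ball (x j) (r j) ∩ ball (x k) (r k))
      = ∑ n ∈ Finset.range N, ∑ m ∈ Finset.range N,
          μ ((⋃ i ∈ K (Gs n), ball (x i) (r i)) ∩ ⋃ i ∈ K (Gs m), ball (x i) (r i)) := by
    intro N
    rw [hTdef, Finset.sum_biUnion (hblockPD N)]
    refine Finset.sum_congr rfl fun n _ => ?_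
    have : ∀ j, ∑ k ∈ (Finset.range N).biUnion (fun m => K (Gs m)),
        μ (ball (x j) (r j) ∩ ball (x k) (r k))
        = ∑ m ∈ Finset.range N, ∑ k ∈ K (Gs m),
            μ (ball (x j) (r j) ∩ ball (x k) (r k)) := by
      intro j
      rw [Finset.sum_biUnion (hblockPD N)]
    simp_rw [this]
    rw [Finset.sum_comm]
    exact Finset.sum_congr rfl fun m _ => hcross n m
  -- the lower bound for block unions
  have hElb : ∀ n, ε ≤ μ (⋃ i ∈ K (Gs n), ball (x i) (r i)) := fun n =>
    (hK (Gs n)).2.2.2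
  -- count grows at least linearly
  have hQN : ∀ N, N ≤ Nat.count p (Gs N) := by
    intro N
    have h1 : (T N).card ≤ Nat.count p (Gs N) := by
      rw [← hIm N]
      exact le_trans (Finset.card_le_card (Finset.subset_of_eq rfl))
        (le_trans Finset.card_image_le (by rw [Finset.card_range]))
    have h2 : N ≤ (T N).card := by
      rw [hTdef, Finset.card_biUnion (fun a ha b hb hab => hblockPD N ha hb hab)]
      calc N = ∑ _n ∈ Finset.range N, 1 := by simp
        _ ≤ _ := Finset.sum_le_sum fun n _ => Finset.card_pos.2 (hKne (Gs n))
    omega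
  refine ⟨φ, hφmono, ?_, ?_, ?_⟩
  · -- balls contained in B
    intro i
    obtain ⟨n, hn⟩ := hφmem i
    exact (hK (Gs n)).2.2.1 _ hn
  · -- tsum = ⊤
    by_contra h
    obtain ⟨N, hN⟩ := ENNReal.exists_nat_mul_gt hε0 h
    have hle : (N : ℝ≥0∞) * ε ≤ ∑' i, μ (ball (x (φ i)) (r (φ i))) := by
      calc (N : ℝ≥0∞) * ε = ∑ _n ∈ Finset.range N, ε := by
            rw [Finset.sum_const, Finset.card_range, nsmul_eq_mul]
        _ ≤ ∑ n ∈ Finset.range N, μ (⋃ i ∈ K (Gs n), ball (x i) (r i)) :=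
            Finset.sum_le_sum fun n _ => hElb n
        _ = ∑ j ∈ T N, μ (ball (x j) (r j)) := (hTsum1 N).symm
        _ = ∑ s ∈ Finset.range (Nat.count p (Gs N)), μ (ball (x (φ s)) (r (φ s))) :=
            (hsum N _).symm
        _ ≤ ∑' i, μ (ball (x (φ i)) (r (φ i))) := ENNReal.sum_le_tsum _
    exact absurd hle (not_le.2 hN)
  · -- frequently
    rw [frequently_atTop]
    intro M
    refine ⟨Nat.count p (Gs M), hQN M, ?_⟩
    set c : ℝ≥0∞ := (μ (ball y ρ) * ENNReal.ofReal (κ ^ 2))⁻¹ with hcdef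
    calc ∑ s ∈ Finset.range (Nat.count p (Gs M)), ∑ t ∈ Finset.range (Nat.count p (Gs M)),
          μ (ball (x (φ s)) (r (φ s)) ∩ ball (x (φ t)) (r (φ t)))
        = ∑ j ∈ T M, ∑ k ∈ T M, μ (ball (x j) (r j) ∩ ball (x k) (r k)) := by
          rw [← hsum M (fun j => ∑ k ∈ T M, μ (ball (x j) (r j) ∩ ball (x k) (r k)))]
          exact Finset.sum_congr rfl fun s _ =>
            hsum M (fun k => μ (ball (x (φ s)) (r (φ s)) ∩ ball (x k) (r k)))
      _ = ∑ n ∈ Finset.range M, ∑ m ∈ Finset.range M,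
            μ ((⋃ i ∈ K (Gs n), ball (x i) (r i)) ∩ ⋃ i ∈ K (Gs m), ball (x i) (r i)) :=
          hTsum2 M
      _ ≤ ∑ n ∈ Finset.range M, ∑ m ∈ Finset.range M,
            c * (μ (⋃ i ∈ K (Gs n), ball (x i) (r i)) *
              μ (⋃ i ∈ K (Gs m), ball (x i) (r i))) :=
          Finset.sum_le_sum fun n _ => Finset.sum_le_sum fun m _ => hKpair _ _
      _ = c * ((∑ n ∈ Finset.range M, μ (⋃ i ∈ K (Gs n), ball (x i) (r i))) *
            (∑ m ∈ Finset.range M, μ (⋃ i ∈ K (Gs m), ball (x i) (r i)))) := by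
          rw [Finset.sum_mul_sum]
          simp_rw [Finset.mul_sum]
      _ = c * (∑ s ∈ Finset.range (Nat.count p (Gs M)),
            μ (ball (x (φ s)) (r (φ s)))) ^ 2 := by
          rw [hsum M (fun j => μ (ball (x j) (r j))), hTsum1 M, sq]
end

section
/- Let (Ω, 𝒜, μ, d) be a metric measure space with a Borel probability measure μ, let {B_i}_{i∈ℕ} be a sequence of balls in Ω, and let κ ∈ (0,1] be a constant. Suppose that for every G ∈ ℕ there is a finite subcollection 𝒦_G ⊆ {B_i : i ≥ G} of pairwise disjoint balls such that, writing E_G := ⋃_{L∈𝒦_G} L, one has μ(E_G) ≥ κ and μ(E_G ∩ E_{G'}) ≤ κ⁻² μ(E_G) μ(E_{G'}) for all G, G' ∈ ℕ. Then there is a subsequence {L_i}_{i∈ℕ} of {B_i}_{i∈ℕ} with ∑_{i=1}^∞ μ(L_i) = ∞ and, for infinitely many Q ∈ ℕ, ∑_{s,t=1}^Q μ(L_s ∩ L_t) ≤ κ⁻² (∑_{s=1}^Q μ(L_s))². -/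
set_option maxHeartbeats 1000000


open MeasureTheory Filter Set Metric
open scoped ENNReal

/-- **Proposition 2, (B) & (C) ⇒ (D).** Suppose `κ ∈ (0,1]` and for every `G` the finite
index set `K G ⊆ {i : i ≥ G}` picks out pairwise disjoint balls whose union `E_G` satisfies
`μ(E_G) ≥ κ` and `μ(E_G ∩ E_{G'}) ≤ κ⁻² μ(E_G) μ(E_{G'})` for all `G, G'`.  Then there is a
subsequence of the balls `B i` whose measures sum to infinity and which is quasi-independent
on average with constant `κ⁻²`. -/
theorem pairwise_quasi_independence_implies_subsequence_global
    {Ω : Type*} [MetricSpace Ω] [MeasurableSpace Ω] [BorelSpace Ω]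
    (μ : Measure Ω) [IsProbabilityMeasure μ]
    (x : ℕ → Ω) (r : ℕ → ℝ) (hr : ∀ i, 0 < r i)
    (κ : ℝ) (hκ0 : 0 < κ) (hκ1 : κ ≤ 1)
    (K : ℕ → Finset ℕ)
    (hK : ∀ G : ℕ,
      (∀ i ∈ K G, G ≤ i) ∧
      (∀ i ∈ K G, ∀ j ∈ K G, i ≠ j → Disjoint (ball (x i) (r i)) (ball (x j) (r j))) ∧
      ENNReal.ofReal κ ≤ μ (⋃ i ∈ K G, ball (x i) (r i)))
    (hKpair : ∀ G G' : ℕ,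
      μ ((⋃ i ∈ K G, ball (x i) (r i)) ∩ ⋃ i ∈ K G', ball (x i) (r i))
        ≤ (ENNReal.ofReal (κ ^ 2))⁻¹ *
            (μ (⋃ i ∈ K G, ball (x i) (r i)) * μ (⋃ i ∈ K G', ball (x i) (r i)))) :
    ∃ φ : ℕ → ℕ, StrictMono φ ∧
      (∑' i, μ (ball (x (φ i)) (r (φ i))) = ⊤) ∧
      ∃ᶠ Q in atTop,
        ∑ s ∈ Finset.range Q, ∑ t ∈ Finset.range Q,
            μ (ball (x (φ s)) (r (φ s)) ∩ ball (x (φ t)) (r (φ t)))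
          ≤ (ENNReal.ofReal (κ ^ 2))⁻¹ *
              (∑ s ∈ Finset.range Q, μ (ball (x (φ s)) (r (φ s)))) ^ 2 := by
  classical
  have hBmeas : ∀ i, MeasurableSet (ball (x i) (r i)) := fun i => measurableSet_ball
  let E : ℕ → Set Ω := fun G => ⋃ i ∈ K G, ball (x i) (r i)
  have hEκ : ∀ G, ENNReal.ofReal κ ≤ μ (E G) := fun G => (hK G).2.2
  have hEpair : ∀ G G', μ (E G ∩ E G')
      ≤ (ENNReal.ofReal (κ ^ 2))⁻¹ * (μ (E G) * μ (E G')) := hKpair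
  have hKlb : ∀ G, ∀ i ∈ K G, G ≤ i := fun G => (hK G).1
  have hKd : ∀ G, ∀ i ∈ K G, ∀ j ∈ K G, i ≠ j →
      Disjoint (ball (x i) (r i)) (ball (x j) (r j)) := fun G => (hK G).2.1
  have hκ0' : ENNReal.ofReal κ ≠ 0 := by
    simp [ENNReal.ofReal_eq_zero, not_le, hκ0]
  -- every K G is nonempty
  have hKne : ∀ G, (K G).Nonempty := by
    intro G
    rcases (K G).eq_empty_or_nonempty with h | h
    · exfalso
      have h2 := hEκ G
      simp only [E, h, Finset.notMem_empty, iUnion_of_empty, iUnion_empty,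
        measure_empty, nonpos_iff_eq_zero] at h2
      exact hκ0' h2
    · exact h
  -- measure of each block union equals the sum
  have hsumE : ∀ G, ∑ i ∈ K G, μ (ball (x i) (r i)) = μ (E G) := by
    intro G
    exact (measure_biUnion_finset
      (fun i hi j hj hij => hKd G i hi j hj hij) (fun i _ => hBmeas i)).symm
  have hEmeas : ∀ G, MeasurableSet (E G) :=
    fun G => (K G).measurableSet_biUnion fun i _ => hBmeas i
  -- the sequence of generations
  let Gs : ℕ → ℕ := fun n => Nat.rec 0 (fun _ g => (K g).sup id + 1) n
  have hGsS : ∀ n, Gs (n + 1) = (K (Gs n)).sup id + 1 := fun n => rfl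
  have hblock_lt : ∀ n, ∀ i ∈ K (Gs n), i < Gs (n + 1) := by
    intro n i hi
    rw [hGsS]
    exact Nat.lt_succ_of_le (Finset.le_sup (f := id) hi)
  have hGmono : StrictMono Gs := strictMono_nat_of_lt_succ (by
    intro n
    obtain ⟨i, hi⟩ := hKne (Gs n)
    exact lt_of_le_of_lt (hKlb _ i hi) (hblock_lt n i hi))
  have hcross : ∀ a b, a < b → ∀ i ∈ K (Gs a), ∀ j ∈ K (Gs b), i < j := by
    intro a b hab i hi j hj
    calc i < Gs (a + 1) := hblock_lt a i hi
      _ ≤ Gs b := hGmono.monotone hab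
      _ ≤ j := hKlb _ j hj
  have hKKdisj : ∀ a b, a ≠ b → Disjoint (K (Gs a)) (K (Gs b)) := by
    intro a b hab
    rw [Finset.disjoint_left]
    intro i hia hib
    rcases hab.lt_or_gt with h | h
    · exact lt_irrefl i (hcross a b h i hia i hib)
    · exact lt_irrefl i (hcross b a h i hib i hia)
  -- the index predicate
  let p : ℕ → Prop := fun i => ∃ n, i ∈ K (Gs n)
  have hp : (setOf p).Infinite := by
    apply Set.infinite_of_not_bddAbove
    rintro ⟨m, hm⟩
    obtain ⟨i, hi⟩ := hKne (Gs (m + 1))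
    have h1 : i ≤ m := hm ⟨m + 1, hi⟩
    have h2 : m + 1 ≤ i := le_trans (hGmono.le_apply) (hKlb _ i hi)
    omega
  -- the block finsets
  let F : ℕ → Finset ℕ := fun N => (Finset.range N).biUnion fun a => K (Gs a)
  have hmemF : ∀ N j, j ∈ F N ↔ p j ∧ j < Gs N := by
    intro N j
    simp only [F, Finset.mem_biUnion, Finset.mem_range]
    constructor
    · rintro ⟨a, haN, hj⟩
      exact ⟨⟨a, hj⟩, lt_of_lt_of_le (hblock_lt a j hj) (hGmono.monotone haN)⟩
    · rintro ⟨⟨n, hn⟩, hj⟩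
      refine ⟨n, ?_, hn⟩
      by_contra h
      push_neg at h
      exact absurd (lt_of_lt_of_le hj (le_trans (hGmono.monotone h) (hKlb _ j hn)))
        (lt_irrefl j)
  have hcount : ∀ N, Nat.count p (Gs N) = (F N).card := by
    intro N
    rw [Nat.count_eq_card_filter_range]
    congr 1
    ext j
    simp only [Finset.mem_filter, Finset.mem_range, hmemF]
    tauto
  have himage : ∀ N, (Finset.range ((F N).card)).image (Nat.nth p) = F N := by
    intro N
    ext j
    simp only [Finset.mem_image, Finset.mem_range]
    constructor
    · rintro ⟨i, hi, rfl⟩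
      rw [hmemF]
      refine ⟨Nat.nth_mem_of_infinite hp i, ?_⟩
      have h1 : i < Nat.count p (Gs N) := by rwa [hcount]
      exact (Nat.lt_nth_iff_count_lt hp).mp h1
    · intro hj
      rw [hmemF] at hj
      refine ⟨Nat.count p j, ?_, Nat.nth_count hj.1⟩
      rw [← hcount N, Nat.lt_nth_iff_count_lt hp, Nat.nth_count hj.1]
      exact hj.2
  -- sums over F N
  have hsumF : ∀ N (f : ℕ → ℝ≥0∞),
      ∑ j ∈ F N, f j = ∑ a ∈ Finset.range N, ∑ j ∈ K (Gs a), f j := by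
    intro N f
    exact Finset.sum_biUnion (fun a _ b _ hab => hKKdisj a b hab)
  have hsumIm : ∀ N (f : ℕ → ℝ≥0∞),
      ∑ s ∈ Finset.range ((F N).card), f (Nat.nth p s) = ∑ j ∈ F N, f j := by
    intro N f
    have h := Finset.sum_image (s := Finset.range ((F N).card)) (f := f)
      (g := Nat.nth p) (fun a _ b _ h => Nat.nth_injective hp h)
    rw [himage N] at h
    exact h.symm
  -- the key product identity
  have hprod : ∀ G G',
      ∑ i ∈ K G, ∑ j ∈ K G', μ (ball (x i) (r i) ∩ ball (x j) (r j))
        = μ (E G ∩ E G') := by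
    intro G G'
    have h1 : ∀ i, ∑ j ∈ K G', μ (ball (x i) (r i) ∩ ball (x j) (r j))
        = μ (ball (x i) (r i) ∩ E G') := by
      intro i
      have : ball (x i) (r i) ∩ E G'
          = ⋃ j ∈ K G', ball (x i) (r i) ∩ ball (x j) (r j) := by
        simp only [E, inter_iUnion]
      rw [this]
      exact (measure_biUnion_finset
        (fun j hj k hk hjk =>
          (hKd G' j hj k hk hjk).mono inter_subset_right inter_subset_right)
        (fun j _ => (hBmeas i).inter (hBmeas j))).symm
    calc ∑ i ∈ K G, ∑ j ∈ K G', μ (ball (x i) (r i) ∩ ball (x j) (r j))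
        = ∑ i ∈ K G, μ (ball (x i) (r i) ∩ E G') :=
          Finset.sum_congr rfl fun i _ => h1 i
      _ = μ (E G ∩ E G') := by
          have : E G ∩ E G' = ⋃ i ∈ K G, ball (x i) (r i) ∩ E G' := by
            simp only [E, iUnion_inter]
          rw [this]
          exact (measure_biUnion_finset
            (fun i hi j hj hij =>
              (hKd G i hi j hj hij).mono inter_subset_left inter_subset_left)
            (fun i _ => (hBmeas i).inter (hEmeas G'))).symm
  refine ⟨Nat.nth p, Nat.nth_strictMono hp, ?_, ?_⟩
  · -- the tsum is infinite
    by_contra hne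
    have hcnt : ∀ N : ℕ, (N : ℝ≥0∞) * ENNReal.ofReal κ
        ≤ ∑' i, μ (ball (x (Nat.nth p i)) (r (Nat.nth p i))) := by
      intro N
      calc (N : ℝ≥0∞) * ENNReal.ofReal κ
          = ∑ _a ∈ Finset.range N, ENNReal.ofReal κ := by
            rw [Finset.sum_const, Finset.card_range, nsmul_eq_mul]
        _ ≤ ∑ a ∈ Finset.range N, μ (E (Gs a)) := Finset.sum_le_sum fun a _ => hEκ _
        _ = ∑ a ∈ Finset.range N, ∑ j ∈ K (Gs a), μ (ball (x j) (r j)) :=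
            Finset.sum_congr rfl fun a _ => (hsumE _).symm
        _ = ∑ j ∈ F N, μ (ball (x j) (r j)) := (hsumF N _).symm
        _ = ∑ s ∈ Finset.range ((F N).card),
              μ (ball (x (Nat.nth p s)) (r (Nat.nth p s))) :=
            (hsumIm N fun j => μ (ball (x j) (r j))).symm
        _ ≤ _ := ENNReal.sum_le_tsum _
    have hdiv : (∑' i, μ (ball (x (Nat.nth p i)) (r (Nat.nth p i)))) / ENNReal.ofReal κ < ⊤ :=
      ENNReal.div_lt_top hne hκ0'
    obtain ⟨N, hN⟩ := ENNReal.exists_nat_gt hdiv.ne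
    have hlt : (∑' i, μ (ball (x (Nat.nth p i)) (r (Nat.nth p i)))) < N * ENNReal.ofReal κ :=
      (ENNReal.div_lt_iff (Or.inl hκ0') (Or.inl ENNReal.ofReal_ne_top)).mp hN
    exact absurd (hcnt N) (not_le.mpr hlt)
  · -- the frequently statement
    rw [Filter.frequently_atTop]
    intro m
    refine ⟨(F m).card, ?_, ?_⟩
    · have hcard : (F m).card = ∑ a ∈ Finset.range m, (K (Gs a)).card :=
        Finset.card_biUnion (fun a _ b _ hab => hKKdisj a b hab)
      rw [hcard]
      calc m = ∑ _a ∈ Finset.range m, 1 := by simp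
        _ ≤ _ := Finset.sum_le_sum fun a _ => Finset.card_pos.mpr (hKne _)
    · have hL : ∑ s ∈ Finset.range ((F m).card), ∑ t ∈ Finset.range ((F m).card),
            μ (ball (x (Nat.nth p s)) (r (Nat.nth p s))
              ∩ ball (x (Nat.nth p t)) (r (Nat.nth p t)))
          = ∑ a ∈ Finset.range m, ∑ b ∈ Finset.range m, μ (E (Gs a) ∩ E (Gs b)) := by
        calc ∑ s ∈ Finset.range ((F m).card), ∑ t ∈ Finset.range ((F m).card),
                μ (ball (x (Nat.nth p s)) (r (Nat.nth p s))
                  ∩ ball (x (Nat.nth p t)) (r (Nat.nth p t)))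
            = ∑ s ∈ Finset.range ((F m).card), ∑ k ∈ F m,
                μ (ball (x (Nat.nth p s)) (r (Nat.nth p s)) ∩ ball (x k) (r k)) :=
              Finset.sum_congr rfl fun s _ => hsumIm m
                (fun k => μ (ball (x (Nat.nth p s)) (r (Nat.nth p s)) ∩ ball (x k) (r k)))
          _ = ∑ j ∈ F m, ∑ k ∈ F m, μ (ball (x j) (r j) ∩ ball (x k) (r k)) :=
              hsumIm m (fun j => ∑ k ∈ F m, μ (ball (x j) (r j) ∩ ball (x k) (r k)))
          _ = ∑ a ∈ Finset.range m, ∑ j ∈ K (Gs a), ∑ k ∈ F m,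
                μ (ball (x j) (r j) ∩ ball (x k) (r k)) := hsumF m _
          _ = ∑ a ∈ Finset.range m, ∑ j ∈ K (Gs a), ∑ b ∈ Finset.range m,
                ∑ k ∈ K (Gs b), μ (ball (x j) (r j) ∩ ball (x k) (r k)) :=
              Finset.sum_congr rfl fun a _ => Finset.sum_congr rfl fun j _ => hsumF m _
          _ = ∑ a ∈ Finset.range m, ∑ b ∈ Finset.range m, ∑ j ∈ K (Gs a),
                ∑ k ∈ K (Gs b), μ (ball (x j) (r j) ∩ ball (x k) (r k)) :=
              Finset.sum_congr rfl fun a _ => Finset.sum_comm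
          _ = ∑ a ∈ Finset.range m, ∑ b ∈ Finset.range m, μ (E (Gs a) ∩ E (Gs b)) :=
              Finset.sum_congr rfl fun a _ => Finset.sum_congr rfl fun b _ => hprod _ _
      have hR : ∑ s ∈ Finset.range ((F m).card),
            μ (ball (x (Nat.nth p s)) (r (Nat.nth p s)))
          = ∑ a ∈ Finset.range m, μ (E (Gs a)) := by
        rw [hsumIm m fun j => μ (ball (x j) (r j)), hsumF m]
        exact Finset.sum_congr rfl fun a _ => hsumE _
      rw [hL, hR]
      calc ∑ a ∈ Finset.range m, ∑ b ∈ Finset.range m, μ (E (Gs a) ∩ E (Gs b))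
          ≤ ∑ a ∈ Finset.range m, ∑ b ∈ Finset.range m,
              (ENNReal.ofReal (κ ^ 2))⁻¹ * (μ (E (Gs a)) * μ (E (Gs b))) :=
            Finset.sum_le_sum fun a _ => Finset.sum_le_sum fun b _ => hEpair _ _
        _ = (ENNReal.ofReal (κ ^ 2))⁻¹ * (∑ a ∈ Finset.range m, μ (E (Gs a))) ^ 2 := by
            rw [pow_two (∑ a ∈ Finset.range m, μ (E (Gs a))), Finset.sum_mul_sum,
              Finset.mul_sum]
            exact Finset.sum_congr rfl fun a _ => (Finset.mul_sum _ _ _).symm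
end

section
/- Let (Ω, 𝒜, μ, d) be a metric measure space equipped with a Borel probability measure μ, let E be a Borel subset of Ω, and let f : (0,∞) → (0,∞) be an increasing function with f(x) → 0 as x → 0. Assume that μ(E ∩ A) ≥ f(μ(A)) for every open subset A ⊆ Ω with μ(A) > 0. Then μ(E) = 1. -/
open MeasureTheory Filter Set
open scoped ENNReal

/-- **Full measure criterion for open sets (Lemma 6 of [BDV06]).** Let `μ` be a Borel
probability measure on a metric space, `E` a Borel set and `f : (0,∞) → (0,∞)` an increasing
function with `f(x) → 0` as `x → 0`.  If `μ(E ∩ A) ≥ f(μ(A))` for every open set `A` with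
`μ(A) > 0`, then `μ(E) = 1`. -/
theorem full_measure_of_open_density
    {Ω : Type*} [MetricSpace Ω] [MeasurableSpace Ω] [BorelSpace Ω]
    (μ : Measure Ω) [IsProbabilityMeasure μ]
    (E : Set Ω) (hEmeas : MeasurableSet E)
    (f : ℝ → ℝ)
    (hf_pos : ∀ x : ℝ, 0 < x → 0 < f x)
    (hf_mono : MonotoneOn f (Set.Ioi (0 : ℝ)))
    (hf_lim : Tendsto f (nhdsWithin 0 (Set.Ioi (0 : ℝ))) (nhds 0))
    (h : ∀ A : Set Ω, IsOpen A → 0 < μ A →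
      ENNReal.ofReal (f (μ A).toReal) ≤ μ (E ∩ A)) :
    μ E = 1 := by
  by_contra hE
  -- μ Eᶜ > 0
  have hc : 0 < μ Eᶜ := by
    rw [pos_iff_ne_zero, Ne, prob_compl_eq_zero_iff hEmeas]
    exact hE
  have hcne : μ Eᶜ ≠ ∞ := measure_ne_top μ _
  set ε : ℝ := f (μ Eᶜ).toReal with hε
  have hεpos : 0 < ε := hf_pos _ (ENNReal.toReal_pos hc.ne' hcne)
  -- outer regularity
  have hδ : (ENNReal.ofReal ε / 2 : ℝ≥0∞) ≠ 0 := by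
    simp [ENNReal.div_eq_zero_iff, hεpos, not_le.mpr hεpos]
  obtain ⟨A, hAsub, hAopen, hAlt⟩ := Set.exists_isOpen_lt_add Eᶜ hcne hδ
  have hApos : 0 < μ A := lt_of_lt_of_le hc (measure_mono hAsub)
  have hAne : μ A ≠ ∞ := measure_ne_top μ _
  -- f (μ A) ≥ ε since μ A ≥ μ Eᶜ
  have hmono : ε ≤ f (μ A).toReal := by
    apply hf_mono (ENNReal.toReal_pos hc.ne' hcne) (ENNReal.toReal_pos hApos.ne' hAne)
    exact ENNReal.toReal_le_toReal hcne hAne |>.mpr (measure_mono hAsub)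
  have hlow : ENNReal.ofReal ε ≤ μ (E ∩ A) :=
    le_trans (ENNReal.ofReal_le_ofReal hmono) (h A hAopen hApos)
  -- μ (E ∩ A) = μ A - μ Eᶜ < ε/2
  have hsplit : μ (E ∩ A) + μ Eᶜ = μ A := by
    have : μ (E ∩ A) + μ (Eᶜ ∩ A) = μ A := by
      rw [inter_comm E A, inter_comm Eᶜ A, ← Set.diff_eq]
      exact measure_inter_add_diff A hEmeas
    rw [inter_eq_left.mpr hAsub] at this
    exact this
  have hup : μ (E ∩ A) < ENNReal.ofReal ε / 2 := by
    have := hAlt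
    rw [← hsplit] at this
    have h2 : μ (E ∩ A) + μ Eᶜ < ENNReal.ofReal ε / 2 + μ Eᶜ := by
      calc μ (E ∩ A) + μ Eᶜ < μ Eᶜ + ENNReal.ofReal ε / 2 := this
        _ = ENNReal.ofReal ε / 2 + μ Eᶜ := add_comm _ _
    exact ENNReal.add_lt_add_iff_right hcne |>.mp h2
  have : ENNReal.ofReal ε < ENNReal.ofReal ε / 2 := lt_of_le_of_lt hlow hup
  have h2 : ENNReal.ofReal ε / 2 ≤ ENNReal.ofReal ε :=
    ENNReal.half_le_self
  exact absurd this (not_lt.mpr h2)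
end
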